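/- Let N ≥ 2, f ∈ C¹(ℝ), and u ∉ H¹(B₁) a semi-stable radial solution of -Δu = f(u) on the punctured closed unit ball of ℝ^N. Then there exist constants K > 0 and r₀ ∈ (0,1) such that for all r ∈ (0, r₀): ∫_{r/2}^{r} ds / u_r(s)² ≤ K · r^{N + 2√(N-1) - 1}. -/

import Mathlib

open Set MeasureTheory intervalIntegral

namespace Stmt7Aux

/-- The weight `h(t) = t^(N-1) u'(t)^2`. -/
noncomputable def hw (N : ℕ) (u : ℝ → ℝ) : ℝ → ℝ :=
  fun t => t ^ ((N : ℝ) - 1) * (deriv u t) ^ 2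

lemma hw_def (N : ℕ) (u : ℝ → ℝ) (t : ℝ) :
    hw N u t = t ^ ((N : ℝ) - 1) * (deriv u t) ^ 2 := rfl

lemma lipschitzOnWith_min {f g : ℝ → ℝ} {s : Set ℝ} {K : NNReal}
    (hf : LipschitzOnWith K f s) (hg : LipschitzOnWith K g s) :
    LipschitzOnWith K (fun x => min (f x) (g x)) s := by
  rw [lipschitzOnWith_iff_dist_le_mul] at *
  intro x hx y hy
  calc dist (min (f x) (g x)) (min (f y) (g y))
      ≤ max (dist (f x) (f y)) (dist (g x) (g y)) := by
        simp only [Real.dist_eq]; exact abs_min_sub_min_le_max _ _ _ _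
    _ ≤ K * dist x y := max_le (hf x hx y hy) (hg x hx y hy)

lemma lipschitzOnWith_max {f g : ℝ → ℝ} {s : Set ℝ} {K : NNReal}
    (hf : LipschitzOnWith K f s) (hg : LipschitzOnWith K g s) :
    LipschitzOnWith K (fun x => max (f x) (g x)) s := by
  rw [lipschitzOnWith_iff_dist_le_mul] at *
  intro x hx y hy
  calc dist (max (f x) (g x)) (max (f y) (g y))
      ≤ max (dist (f x) (f y)) (dist (g x) (g y)) := by
        simp only [Real.dist_eq]; exact abs_max_sub_max_le_max _ _ _ _
    _ ≤ K * dist x y := max_le (hf x hx y hy) (hg x hx y hy)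

lemma lipschitzOnWith_weaken {f : ℝ → ℝ} {s : Set ℝ} {K K' : NNReal}
    (h : LipschitzOnWith K f s) (hKK : K ≤ K') : LipschitzOnWith K' f s := by
  rw [lipschitzOnWith_iff_dist_le_mul] at *
  intro x hx y hy
  exact (h x hx y hy).trans (mul_le_mul_of_nonneg_right (by exact_mod_cast hKK) dist_nonneg)

lemma exlip_min {f g : ℝ → ℝ} {s : Set ℝ}
    (hf : ∃ K, LipschitzOnWith K f s) (hg : ∃ K, LipschitzOnWith K g s) :
    ∃ K, LipschitzOnWith K (fun x => min (f x) (g x)) s := by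
  obtain ⟨K1, h1⟩ := hf; obtain ⟨K2, h2⟩ := hg
  exact ⟨max K1 K2, lipschitzOnWith_min (lipschitzOnWith_weaken h1 (le_max_left _ _))
    (lipschitzOnWith_weaken h2 (le_max_right _ _))⟩

lemma exlip_max {f g : ℝ → ℝ} {s : Set ℝ}
    (hf : ∃ K, LipschitzOnWith K f s) (hg : ∃ K, LipschitzOnWith K g s) :
    ∃ K, LipschitzOnWith K (fun x => max (f x) (g x)) s := by
  obtain ⟨K1, h1⟩ := hf; obtain ⟨K2, h2⟩ := hg
  exact ⟨max K1 K2, lipschitzOnWith_max (lipschitzOnWith_weaken h1 (le_max_left _ _))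
    (lipschitzOnWith_weaken h2 (le_max_right _ _))⟩

lemma exlip_of_deriv_bound {f f' : ℝ → ℝ} {s : Set ℝ} (hconv : Convex ℝ s)
    (hd : ∀ x ∈ s, HasDerivAt f (f' x) x) {C : ℝ} (hC : ∀ x ∈ s, |f' x| ≤ C) :
    ∃ K, LipschitzOnWith K f s := by
  refine ⟨⟨max C 0, le_max_right _ _⟩,
    hconv.lipschitzOnWith_of_nnnorm_hasDerivWithin_le
      (fun x hx => (hd x hx).hasDerivWithinAt) (fun x hx => ?_)⟩
  apply NNReal.coe_le_coe.mp
  calc (‖f' x‖₊ : ℝ) = |f' x| := by simp [Real.norm_eq_abs]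
    _ ≤ max C 0 := (hC x hx).trans (le_max_left _ _)

lemma exlip_const_mul {f : ℝ → ℝ} {s : Set ℝ} (c : ℝ)
    (hf : ∃ K, LipschitzOnWith K f s) :
    ∃ K, LipschitzOnWith K (fun x => c * f x) s := by
  obtain ⟨K, hK⟩ := hf
  rw [lipschitzOnWith_iff_dist_le_mul] at hK
  refine ⟨⟨|c|, abs_nonneg c⟩ * K, ?_⟩
  rw [lipschitzOnWith_iff_dist_le_mul]
  intro x hx y hy
  simp only [Real.dist_eq, ← mul_sub, abs_mul]
  calc |c| * |f x - f y| ≤ |c| * (K * |x - y|) := by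
        apply mul_le_mul_of_nonneg_left _ (abs_nonneg c)
        simpa [Real.dist_eq] using hK x hx y hy
    _ = (⟨|c|, abs_nonneg c⟩ * K : NNReal) * |x - y| := by
          show |c| * ((K:ℝ) * |x - y|) = (|c| * (K:ℝ)) * |x - y|; ring

lemma exlip_add {f g : ℝ → ℝ} {s : Set ℝ}
    (hf : ∃ K, LipschitzOnWith K f s) (hg : ∃ K, LipschitzOnWith K g s) :
    ∃ K, LipschitzOnWith K (fun x => f x + g x) s := by
  obtain ⟨K1, h1⟩ := hf; obtain ⟨K2, h2⟩ := hg
  exact ⟨K1 + K2, h1.add h2⟩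

/-- congruence for interval integrals of functions agreeing on the open interval. -/
lemma integral_congr_Ioo {f g : ℝ → ℝ} {x y : ℝ} (hxy : x ≤ y)
    (h : ∀ t ∈ Ioo x y, f t = g t) :
    ∫ t in x..y, f t = ∫ t in x..y, g t := by
  apply intervalIntegral.integral_congr_ae
  have hy : ({y}ᶜ : Set ℝ) ∈ ae (volume : Measure ℝ) := by
    rw [mem_ae_iff]; simp
  filter_upwards [hy] with t hty htI
  apply h
  rw [Set.uIoc_of_le hxy] at htI
  exact ⟨htI.1, lt_of_le_of_ne htI.2 hty⟩


variable {u : ℝ → ℝ}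

lemma contDeriv (hu : ContDiffOn ℝ 2 u (Ioc (0:ℝ) 1)) :
    ContinuousOn (deriv u) (Ioo (0:ℝ) 1) := by
  have h1 : ContinuousOn (derivWithin u (Ioc (0:ℝ) 1)) (Ioc (0:ℝ) 1) :=
    hu.continuousOn_derivWithin (uniqueDiffOn_Ioc _ _) one_le_two
  have h2 : ∀ t ∈ Ioo (0:ℝ) 1, deriv u t = derivWithin u (Ioc (0:ℝ) 1) t := fun t ht =>
    (derivWithin_of_mem_nhds (mem_nhds_iff.2 ⟨Ioo 0 1, Ioo_subset_Ioc_self, isOpen_Ioo, ht⟩)).symm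
  exact (h1.mono Ioo_subset_Ioc_self).congr h2

lemma contHw (N : ℕ) (hcd : ContinuousOn (deriv u) (Ioo (0:ℝ) 1)) :
    ContinuousOn (hw N u) (Ioo (0:ℝ) 1) := by
  apply ContinuousOn.mul _ (hcd.pow 2)
  intro t ht
  exact (Real.continuousAt_rpow_const t _ (Or.inl (ne_of_gt ht.1))).continuousWithinAt

lemma hwPos (N : ℕ) {t : ℝ} (ht : 0 < t) (hd : deriv u t ≠ 0) : 0 < hw N u t :=
  mul_pos (Real.rpow_pos_of_pos ht _) (pow_pos (abs_pos.mpr hd) 2 |>.trans_eq (by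
    rw [← abs_pow]; exact (abs_of_nonneg (sq_nonneg _))))

lemma hwNonneg (N : ℕ) {t : ℝ} (ht : 0 ≤ t) : 0 ≤ hw N u t :=
  mul_nonneg (Real.rpow_nonneg ht _) (sq_nonneg _)

lemma tailInt (N : ℕ) (hu : ContDiffOn ℝ 2 u (Ioc (0:ℝ) 1))
    {c : ℝ} (hc : 0 < c) : IntegrableOn (hw N u) (Ioc c 1) := by
  rcases le_or_gt 1 c with h1 | h1
  · rw [Ioc_eq_empty (by exact not_lt.mpr h1)]
    exact integrableOn_empty
  have hk : ContinuousOn (derivWithin u (Ioc (0:ℝ) 1)) (Ioc (0:ℝ) 1) :=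
    hu.continuousOn_derivWithin (uniqueDiffOn_Ioc _ _) one_le_two
  have hsub : Icc c 1 ⊆ Ioc (0:ℝ) 1 := fun x hx => ⟨hc.trans_le hx.1, hx.2⟩
  have hF : IntegrableOn (fun t => t ^ ((N:ℝ)-1) * (derivWithin u (Ioc (0:ℝ) 1) t) ^ 2)
      (Icc c 1) := by
    apply ContinuousOn.integrableOn_compact isCompact_Icc
    apply ContinuousOn.mul
    · intro t ht
      exact (Real.continuousAt_rpow_const t _
        (Or.inl (ne_of_gt (hc.trans_le ht.1)))).continuousWithinAt
    · exact ((hk.mono hsub).pow 2)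
  apply (hF.mono_set Ioc_subset_Icc_self).congr_fun_ae
  have hy : ({(1:ℝ)}ᶜ : Set ℝ) ∈ ae (volume.restrict (Ioc c 1)) := by
    rw [mem_ae_iff, compl_compl]
    exact le_antisymm ((Measure.restrict_le_self (μ := volume) (s := Ioc c 1) _).trans
      (by simp)) (by simp)
  filter_upwards [hy, ae_restrict_mem measurableSet_Ioc] with t ht1 ht2
  have htoo : t ∈ Ioo (0:ℝ) 1 := ⟨hc.trans ht2.1, lt_of_le_of_ne ht2.2 ht1⟩
  have : derivWithin u (Ioc (0:ℝ) 1) t = deriv u t :=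
    derivWithin_of_mem_nhds (mem_nhds_iff.2 ⟨Ioo 0 1, Ioo_subset_Ioc_self, isOpen_Ioo, htoo⟩)
  simp [hw, this]

lemma zero_between (N : ℕ) (hN : 2 ≤ N)
    (hcd : ContinuousOn (deriv u) (Ioo (0:ℝ) 1))
    (hstab : ∀ r₁ r₂ : ℝ, 0 < r₁ → r₁ < r₂ → r₂ < 1 → ∀ η : ℝ → ℝ,
      (∃ C, LipschitzOnWith C η (Icc r₁ r₂)) →
      η r₁ * deriv u r₁ = 0 → η r₂ * deriv u r₂ = 0 →
      0 ≤ ∫ r in r₁..r₂, r ^ ((N : ℝ) - 1) * (deriv u r) ^ 2 *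
          ((deriv η r) ^ 2 - ((N : ℝ) - 1) / r ^ 2 * (η r) ^ 2))
    {t' t₁ s : ℝ} (h0 : 0 < t') (h1 : t' < s) (h2 : s < t₁) (h3 : t₁ < 1)
    (hz1 : deriv u t' = 0) (hz2 : deriv u t₁ = 0) : deriv u s = 0 := by
  by_contra hs
  have hN1 : (0:ℝ) < (N : ℝ) - 1 := by
    have : (2:ℝ) ≤ (N:ℝ) := by exact_mod_cast hN
    linarith
  have hst := hstab t' t₁ h0 (h1.trans h2) h3 (fun _ => 1)
    ⟨0, (LipschitzWith.const (1:ℝ)).lipschitzOnWith⟩ (by simp [hz1]) (by simp [hz2])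
  set g : ℝ → ℝ := fun r => ((N : ℝ) - 1) / r ^ 2 * (r ^ ((N : ℝ) - 1) * (deriv u r) ^ 2)
    with hg
  have hrw : (fun r : ℝ => r ^ ((N : ℝ) - 1) * (deriv u r) ^ 2 *
      ((deriv (fun _ => (1:ℝ)) r) ^ 2 - ((N : ℝ) - 1) / r ^ 2 * ((fun _ => (1:ℝ)) r) ^ 2))
      = fun r => -g r := by
    funext r
    simp only [deriv_const', hg]
    ring
  rw [hrw, intervalIntegral.integral_neg] at hst
  have hpos : 0 < ∫ r in t'..t₁, g r := by
    apply intervalIntegral.integral_pos (h1.trans h2)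
    · apply ContinuousOn.mul
      · apply ContinuousOn.div continuousOn_const (continuousOn_pow 2)
        intro x hx
        have : 0 < x := lt_of_lt_of_le h0 hx.1
        positivity
      · apply (contHw N hcd).mono
        intro x hx
        exact ⟨lt_of_lt_of_le h0 hx.1, lt_of_le_of_lt hx.2 h3⟩
    · intro x hx
      have hx0 : 0 < x := h0.trans hx.1
      have : (0:ℝ) ≤ x ^ ((N : ℝ) - 1) * (deriv u x) ^ 2 := hwNonneg N hx0.le
      positivity
    · refine ⟨s, ⟨h1.le, h2.le⟩, ?_⟩
      have hs0 : 0 < s := h0.trans h1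
      have h2' : (0:ℝ) < (deriv u s) ^ 2 := by positivity
      have h3' : (0:ℝ) < s ^ ((N : ℝ) - 1) := Real.rpow_pos_of_pos hs0 _
      positivity
  linarith

lemma exists_nonvanish (N : ℕ) (hN : 2 ≤ N)
    (hu : ContDiffOn ℝ 2 u (Ioc (0:ℝ) 1))
    (hcd : ContinuousOn (deriv u) (Ioo (0:ℝ) 1))
    (hstab : ∀ r₁ r₂ : ℝ, 0 < r₁ → r₁ < r₂ → r₂ < 1 → ∀ η : ℝ → ℝ,
      (∃ C, LipschitzOnWith C η (Icc r₁ r₂)) →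
      η r₁ * deriv u r₁ = 0 → η r₂ * deriv u r₂ = 0 →
      0 ≤ ∫ r in r₁..r₂, r ^ ((N : ℝ) - 1) * (deriv u r) ^ 2 *
          ((deriv η r) ^ 2 - ((N : ℝ) - 1) / r ^ 2 * (η r) ^ 2))
    (hH1 : ¬ IntegrableOn (fun r : ℝ => r ^ ((N : ℝ) - 1) * (deriv u r) ^ 2)
      (Ioc (0 : ℝ) 1)) :
    ∃ β, 0 < β ∧ β < 1 ∧ ∀ t ∈ Ioo (0:ℝ) β, deriv u t ≠ 0 := by
  by_contra hcon
  push_neg at hcon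
  obtain ⟨t₁, ht₁, hz₁⟩ := hcon (1/2) (by norm_num) (by norm_num)
  have ht₁1 : t₁ < 1 := ht₁.2.trans (by norm_num)
  have hzero : ∀ s ∈ Ioo (0:ℝ) t₁, deriv u s = 0 := by
    intro s hs
    obtain ⟨t', ht', hz'⟩ := hcon s hs.1 (hs.2.trans ht₁1)
    exact zero_between N hN hcd hstab ht'.1 ht'.2 hs.2 ht₁1 hz' hz₁
  apply hH1
  have hun : Ioc (0:ℝ) 1 = Ioc 0 (t₁/2) ∪ Ioc (t₁/2) 1 :=
    (Ioc_union_Ioc_eq_Ioc (by linarith [ht₁.1]) (by linarith)).symm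
  rw [hun]
  apply IntegrableOn.union _ (tailInt N hu (half_pos ht₁.1))
  have : EqOn (fun _ : ℝ => (0:ℝ))
      (fun r : ℝ => r ^ ((N : ℝ) - 1) * (deriv u r) ^ 2) (Ioc 0 (t₁/2)) := by
    intro t ht
    simp [hzero t ⟨ht.1, lt_of_le_of_lt ht.2 (half_lt_self ht₁.1)⟩]
  exact (integrableOn_zero (μ := volume)).congr_fun this measurableSet_Ioc

set_option maxHeartbeats 1000000 in
lemma stability_window (N : ℕ) (hN : 2 ≤ N) {a β ρ₀ : ℝ}
    (ha1 : 1 ≤ a) (haa : a * a = (N:ℝ) - 1)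
    (hβ0 : 0 < β) (hβ1 : β < 1)
    (hnz : ∀ t ∈ Ioo (0:ℝ) β, deriv u t ≠ 0)
    (hcd : ContinuousOn (deriv u) (Ioo (0:ℝ) 1))
    (hstab : ∀ r₁ r₂ : ℝ, 0 < r₁ → r₁ < r₂ → r₂ < 1 → ∀ η : ℝ → ℝ,
      (∃ C, LipschitzOnWith C η (Icc r₁ r₂)) →
      η r₁ * deriv u r₁ = 0 → η r₂ * deriv u r₂ = 0 →
      0 ≤ ∫ r in r₁..r₂, r ^ ((N : ℝ) - 1) * (deriv u r) ^ 2 *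
          ((deriv η r) ^ 2 - ((N : ℝ) - 1) / r ^ 2 * (η r) ^ 2))
    {ρ σ σ' : ℝ} (hσ'0 : 0 < σ') (hσ'σ : σ' < σ) (hσρ : σ < ρ) (hρρ₀ : ρ < ρ₀)
    (h2ρ₀ : 2*ρ₀ < β)
    (hD : (σ/ρ) ^ (2*a) < ∫ t in σ'..σ, 1 / hw N u t) :
    ((N:ℝ)-1) * (∫ t in ρ..ρ₀, hw N u t / t^2) ≤
      (∫ t in ρ₀..(2*ρ₀), hw N u t) / ρ₀^2 + 1 := by
  have hσ0 : 0 < σ := hσ'0.trans hσ'σ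
  have hρ0 : 0 < ρ := hσ0.trans hσρ
  have hρ₀0 : 0 < ρ₀ := hρ0.trans hρρ₀
  have hσ'ρ₀2 : σ' < 2*ρ₀ := by linarith
  have ha0 : 0 < a := lt_of_lt_of_le one_pos ha1
  have hIβ : Icc σ' (2*ρ₀) ⊆ Ioo (0:ℝ) β := fun x hx => ⟨hσ'0.trans_le hx.1, by
    have := hx.2; linarith⟩
  have hI1 : Icc σ' (2*ρ₀) ⊆ Ioo (0:ℝ) 1 := fun x hx =>
    ⟨(hIβ hx).1, (hIβ hx).2.trans hβ1⟩
  have hwc : ContinuousOn (hw N u) (Icc σ' (2*ρ₀)) := (contHw N hcd).mono hI1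
  have hwp : ∀ t ∈ Icc σ' (2*ρ₀), 0 < hw N u t := fun t ht =>
    hwPos N (hIβ ht).1 (hnz t (hIβ ht))
  have hinvc : ContinuousOn (fun t => 1 / hw N u t) (Icc σ' (2*ρ₀)) :=
    continuousOn_const.div hwc (fun t ht => (hwp t ht).ne')
  -- abbreviations
  set A := (σ/ρ)^a with hAdef
  set D := ∫ t in σ'..σ, 1 / hw N u t with hDdef
  have hσρdiv : σ/ρ ≤ 1 := le_of_lt ((div_lt_one hρ0).mpr hσρ)
  have hσρ0 : 0 < σ/ρ := div_pos hσ0 hρ0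
  have hA0 : 0 < A := Real.rpow_pos_of_pos hσρ0 a
  have hA1 : A ≤ 1 := Real.rpow_le_one hσρ0.le hσρdiv ha0.le
  have hA2 : A^2 = (σ/ρ)^(2*a) := by
    rw [sq, ← Real.rpow_add hσρ0]; ring_nf
  have hD0 : 0 < D := lt_trans (Real.rpow_pos_of_pos hσρ0 (2*a)) hD
  have hAD : A^2 < D := by rw [hA2]; exact hD
  -- the ramp integral function
  set Fi := fun x : ℝ => ∫ y in σ'..x, 1 / hw N u y with hFidef
  set clamp := fun t : ℝ => max σ' (min t σ) with hclampdef
  set F := fun t : ℝ => Fi (clamp t) with hFdef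
  have hclampmem : ∀ t, clamp t ∈ Icc σ' σ := fun t =>
    ⟨le_max_left _ _, max_le hσ'σ.le (min_le_right _ _)⟩
  have hIccsub : Icc σ' σ ⊆ Icc σ' (2*ρ₀) := Icc_subset_Icc le_rfl (by linarith)
  have hinv_int : ∀ x ∈ Icc σ' σ, IntervalIntegrable (fun y => 1 / hw N u y) volume σ' x := by
    intro x hx
    apply ContinuousOn.intervalIntegrable
    apply hinvc.mono
    rw [uIcc_of_le hx.1]
    exact (Icc_subset_Icc le_rfl hx.2).trans hIccsub
  have hIβ1 : Ioo (0:ℝ) β ⊆ Ioo (0:ℝ) 1 := fun x hx => ⟨hx.1, hx.2.trans hβ1⟩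
  have hinvco : ContinuousOn (fun t : ℝ => 1 / hw N u t) (Ioo (0:ℝ) β) :=
    continuousOn_const.div ((contHw N hcd).mono hIβ1)
      (fun t ht => (hwPos N ht.1 (hnz t ht)).ne')
  have hFi_deriv : ∀ x ∈ Icc σ' σ, HasDerivAt Fi (1 / hw N u x) x := by
    intro x hx
    have hx1 : x ∈ Ioo (0:ℝ) β := hIβ (hIccsub hx)
    exact intervalIntegral.integral_hasDerivAt_right (hinv_int x hx)
      (hinvco.stronglyMeasurableAtFilter isOpen_Ioo x hx1)
      (hinvco.continuousAt (isOpen_Ioo.mem_nhds hx1))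
  have hFi_mono : ∀ x ∈ Icc σ' σ, ∀ y ∈ Icc σ' σ, x ≤ y → Fi x ≤ Fi y := by
    intro x hx y hy hxy
    have hxyint : IntervalIntegrable (fun y => 1 / hw N u y) volume x y := by
      apply ContinuousOn.intervalIntegrable
      apply hinvc.mono
      rw [uIcc_of_le hxy]
      exact (Icc_subset_Icc hx.1 hy.2).trans hIccsub
    have h1 := intervalIntegral.integral_add_adjacent_intervals (hinv_int x hx) hxyint
    have h2 : 0 ≤ ∫ t in x..y, 1 / hw N u t := by
      apply intervalIntegral.integral_nonneg hxy
      intro t ht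
      have := hwp t (hIccsub ⟨hx.1.trans ht.1, ht.2.trans hy.2⟩)
      positivity
    have e1 : Fi x = ∫ t in σ'..x, 1 / hw N u t := rfl
    have e2 : Fi y = ∫ t in σ'..y, 1 / hw N u t := rfl
    rw [e1, e2]
    linarith
  have hFiσ' : Fi σ' = 0 := intervalIntegral.integral_same
  have hFiσ : Fi σ = D := rfl
  have hF_le_D : ∀ t, F t ≤ D := fun t =>
    hFi_mono _ (hclampmem t) σ ⟨hσ'σ.le, le_rfl⟩ (hclampmem t).2
  have hF_nonneg : ∀ t, 0 ≤ F t := fun t => by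
    have := hFi_mono σ' ⟨le_rfl, hσ'σ.le⟩ _ (hclampmem t) (hclampmem t).1
    rw [hFiσ'] at this; exact this
  have hFval : ∀ t ∈ Icc σ' σ, F t = Fi t := by
    intro t ht
    have hceq : clamp t = t := by
      simp only [hclampdef, min_eq_left ht.2, max_eq_right ht.1]
    show Fi (clamp t) = Fi t
    rw [hceq]
  have hFσle : ∀ t, σ ≤ t → F t = D := by
    intro t ht
    have hceq : clamp t = σ := by
      simp only [hclampdef, min_eq_right ht, max_eq_right hσ'σ.le]
    show Fi (clamp t) = D
    rw [hceq, hFiσ]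
  -- the test function pieces
  set f1 := fun t : ℝ => (t/ρ)^a with hf1def
  set f3 := fun t : ℝ => (2*ρ₀ - t)/ρ₀ with hf3def
  set f4 := fun t : ℝ => A/D * F t + a/ρ * max (t - σ) 0 with hf4def
  set η := fun t : ℝ => min (min (max (f1 t) A) 1) (min (f3 t) (f4 t)) with hηdef
  have hf1_deriv : ∀ x : ℝ, 0 < x → HasDerivAt f1 (a * (x/ρ)^(a-1) * (1/ρ)) x := by
    intro x hx
    have h1 : HasDerivAt (fun t : ℝ => t/ρ) (1/ρ) x := by
      simpa using (hasDerivAt_id x).div_const ρ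
    have h2 : HasDerivAt (fun y : ℝ => y ^ a) (a * (x/ρ)^(a-1)) (x/ρ) :=
      Real.hasDerivAt_rpow_const (Or.inl (by positivity))
    have h3 := h2.comp x h1
    exact h3
  have hconv : ∀ t ∈ Icc σ ρ, f1 t ≤ A + a/ρ * (t - σ) := by
    have hbound : ∀ x ∈ Icc σ ρ, ‖a * (x/ρ)^(a-1) * (1/ρ)‖ ≤ a/ρ := by
      intro x hx
      have hx0 : 0 < x := hσ0.trans_le hx.1
      have h1 : (0:ℝ) ≤ x/ρ := by positivity
      have h2 : x/ρ ≤ 1 := (div_le_one hρ0).mpr hx.2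
      have h3 : (x/ρ)^(a-1) ≤ 1 := Real.rpow_le_one h1 h2 (by linarith)
      have h4 : (0:ℝ) ≤ (x/ρ)^(a-1) := Real.rpow_nonneg h1 _
      rw [Real.norm_eq_abs, abs_of_nonneg (by positivity)]
      calc a * (x/ρ)^(a-1) * (1/ρ) ≤ a * 1 * (1/ρ) := by
            apply mul_le_mul_of_nonneg_right _ (by positivity)
            exact mul_le_mul_of_nonneg_left h3 ha0.le
        _ = a/ρ := by ring
    intro t ht
    have key := Convex.norm_image_sub_le_of_norm_hasDerivWithin_le
      (f := f1) (f' := fun x => a * (x/ρ)^(a-1) * (1/ρ)) (s := Icc σ ρ)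
      (fun x hx => (hf1_deriv x (hσ0.trans_le hx.1)).hasDerivWithinAt) hbound
      (convex_Icc σ ρ) (left_mem_Icc.mpr hσρ.le) ht
    rw [Real.norm_eq_abs, Real.norm_eq_abs, abs_of_nonneg (by linarith [ht.1] : (0:ℝ) ≤ t - σ)]
      at key
    have h5 : f1 σ = A := rfl
    have h6 := (abs_le.mp key).2
    rw [h5] at h6
    have h7 : 0 ≤ a/ρ := by positivity
    nlinarith
  have hf3_ge : ∀ t : ℝ, t ≤ ρ₀ → 1 ≤ f3 t := by
    intro t ht
    show (1:ℝ) ≤ (2*ρ₀ - t)/ρ₀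
    rw [le_div_iff₀ hρ₀0]
    linarith
  have hf3_nonneg : ∀ t : ℝ, t ≤ 2*ρ₀ → 0 ≤ f3 t := by
    intro t ht
    apply div_nonneg _ hρ₀0.le
    linarith
  have hf4_on : ∀ t : ℝ, σ ≤ t → f4 t = A + a/ρ * (t - σ) := by
    intro t ht
    show A/D * F t + a/ρ * max (t - σ) 0 = A + a/ρ * (t - σ)
    rw [hFσle t ht, max_eq_left (by linarith : (0:ℝ) ≤ t - σ), div_mul_cancel₀ _ hD0.ne']
  have hf4_ge1 : ∀ t : ℝ, ρ ≤ t → 1 ≤ f4 t := by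
    intro t ht
    have h1 := hconv ρ (right_mem_Icc.mpr hσρ.le)
    have h2 : f1 ρ = 1 := by
      show (ρ/ρ)^a = 1
      rw [div_self hρ0.ne', Real.one_rpow]
    rw [hf4_on t (hσρ.le.trans ht)]
    have h3 : A + a/ρ*(ρ - σ) ≤ A + a/ρ*(t - σ) := by
      have h7 : 0 ≤ a/ρ := by positivity
      nlinarith
    linarith [h1, h2.symm.trans_le (le_refl (f1 ρ))]
  have hf4_leA : ∀ t : ℝ, t ≤ σ → f4 t ≤ A := by
    intro t ht
    show A/D * F t + a/ρ * max (t - σ) 0 ≤ A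
    rw [max_eq_right (by linarith : t - σ ≤ 0)]
    have h1 : A/D * F t ≤ A/D * D := by
      apply mul_le_mul_of_nonneg_left (hF_le_D t) (by positivity)
    rw [div_mul_cancel₀ _ hD0.ne'] at h1
    linarith
  have hf4_nonneg : ∀ t : ℝ, 0 ≤ f4 t := fun t =>
    add_nonneg (mul_nonneg (by positivity) (hF_nonneg t))
      (mul_nonneg (by positivity) (le_max_right _ _))
  have hf1_ge1 : ∀ t : ℝ, ρ ≤ t → 1 ≤ f1 t := by
    intro t ht
    show (1:ℝ) ≤ (t/ρ)^a
    calc (1:ℝ) = 1 ^ a := (Real.one_rpow a).symm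
      _ ≤ (t/ρ)^a := Real.rpow_le_rpow zero_le_one ((le_div_iff₀ hρ0).mpr (by linarith)) ha0.le
  have hf1_geA : ∀ t : ℝ, σ ≤ t → A ≤ f1 t := by
    intro t ht
    exact Real.rpow_le_rpow hσρ0.le (by gcongr) ha0.le
  have hf1_le1 : ∀ t : ℝ, 0 ≤ t → t ≤ ρ → f1 t ≤ 1 := fun t h0 h1 =>
    Real.rpow_le_one (by positivity) ((div_le_one hρ0).mpr h1) ha0.le
  -- selection of branches
  have hsel1 : ∀ t ∈ Icc σ' σ, η t = A/D * F t := by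
    intro t ht
    have e4 : f4 t = A/D * F t := by
      show A/D * F t + a/ρ * max (t - σ) 0 = A/D * F t
      rw [max_eq_right (by linarith [ht.2] : t - σ ≤ 0)]; ring
    have h4A : f4 t ≤ A := hf4_leA t ht.2
    have hle1 : f4 t ≤ 1 := h4A.trans hA1
    have hlef3 : f4 t ≤ f3 t := hle1.trans (hf3_ge t (by linarith [ht.2]))
    show min (min (max (f1 t) A) 1) (min (f3 t) (f4 t)) = A/D * F t
    rw [min_eq_right hlef3,
      min_eq_right (le_min (h4A.trans (le_max_right _ _)) hle1), e4]
  have hsel2 : ∀ t ∈ Icc σ ρ, η t = f1 t := by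
    intro t ht
    have hmax : max (f1 t) A = f1 t := max_eq_left (hf1_geA t ht.1)
    have h11 : f1 t ≤ 1 := hf1_le1 t (hσ0.le.trans ht.1) ht.2
    have hf3' : f1 t ≤ f3 t := h11.trans (hf3_ge t (ht.2.trans hρρ₀.le))
    have hf4' : f1 t ≤ f4 t := by rw [hf4_on t ht.1]; exact hconv t ht
    show min (min (max (f1 t) A) 1) (min (f3 t) (f4 t)) = f1 t
    rw [hmax, min_eq_left h11, min_eq_left (le_min hf3' hf4')]
  have hsel3 : ∀ t ∈ Icc ρ ρ₀, η t = 1 := by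
    intro t ht
    show min (min (max (f1 t) A) 1) (min (f3 t) (f4 t)) = 1
    rw [min_eq_right ((hf1_ge1 t ht.1).trans (le_max_left _ _)),
      min_eq_left (le_min (hf3_ge t ht.2) (hf4_ge1 t ht.1))]
  have hsel4 : ∀ t ∈ Icc ρ₀ (2*ρ₀), η t = f3 t := by
    intro t ht
    have hρt : ρ ≤ t := hρρ₀.le.trans ht.1
    have hf31 : f3 t ≤ 1 := by
      show (2*ρ₀ - t)/ρ₀ ≤ 1
      rw [div_le_one hρ₀0]
      linarith [ht.1]
    show min (min (max (f1 t) A) 1) (min (f3 t) (f4 t)) = f3 t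
    rw [min_eq_right ((hf1_ge1 t hρt).trans (le_max_left _ _)),
      min_eq_left (hf31.trans (hf4_ge1 t hρt)), min_eq_right hf31]
  -- Lipschitz continuity of η
  have hIconv : Convex ℝ (Icc σ' (2*ρ₀)) := convex_Icc _ _
  have hlipf1 : ∃ C, LipschitzOnWith C f1 (Icc σ' (2*ρ₀)) := by
    apply exlip_of_deriv_bound hIconv
      (f' := fun x => a * (x/ρ)^(a-1) * (1/ρ))
      (fun x hx => hf1_deriv x (hσ'0.trans_le hx.1)) (C := a * (2*ρ₀/ρ)^(a-1) * (1/ρ))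
    intro x hx
    have hx0 : 0 < x := hσ'0.trans_le hx.1
    have h1 : (0:ℝ) ≤ x/ρ := by positivity
    have h2 : (x/ρ)^(a-1) ≤ (2*ρ₀/ρ)^(a-1) :=
      Real.rpow_le_rpow h1 (by gcongr; exact hx.2) (by linarith)
    rw [abs_of_nonneg (by positivity)]
    have h3 : (0:ℝ) ≤ (x/ρ)^(a-1) := Real.rpow_nonneg h1 _
    gcongr
  have hlipA : ∃ C, LipschitzOnWith C (fun _ : ℝ => A) (Icc σ' (2*ρ₀)) :=
    ⟨0, (LipschitzWith.const A).lipschitzOnWith⟩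
  have hlip1 : ∃ C, LipschitzOnWith C (fun _ : ℝ => (1:ℝ)) (Icc σ' (2*ρ₀)) :=
    ⟨0, (LipschitzWith.const (1:ℝ)).lipschitzOnWith⟩
  have hf3_deriv : ∀ x : ℝ, HasDerivAt f3 (-(1/ρ₀)) x := by
    intro x
    have h1 : HasDerivAt (fun t : ℝ => 2*ρ₀ - t) (-1) x := by
      simpa using (hasDerivAt_id x).const_sub (2*ρ₀)
    have := h1.div_const ρ₀
    simpa [neg_div] using this
  have hlipf3 : ∃ C, LipschitzOnWith C f3 (Icc σ' (2*ρ₀)) := by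
    apply exlip_of_deriv_bound hIconv (f' := fun _ => -(1/ρ₀))
      (fun x _ => hf3_deriv x) (C := 1/ρ₀)
    intro x _
    rw [abs_neg, abs_of_nonneg (by positivity)]
  have hlipFi : ∃ C, LipschitzOnWith C Fi (Icc σ' σ) := by
    obtain ⟨Binv, hBinv⟩ :=
      IsCompact.exists_bound_of_continuousOn isCompact_Icc (hinvc.mono hIccsub)
    apply exlip_of_deriv_bound (convex_Icc _ _) (f' := fun y => 1 / hw N u y) hFi_deriv
      (C := Binv)
    intro x hx
    have := hBinv x hx
    rwa [Real.norm_eq_abs] at this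
  have hlipF : ∃ C, LipschitzOnWith C F (Icc σ' (2*ρ₀)) := by
    obtain ⟨C, hC⟩ := hlipFi
    refine ⟨C * 1, ?_⟩
    have hclip : LipschitzOnWith 1 clamp (Icc σ' (2*ρ₀)) :=
      ((LipschitzWith.id.min_const σ).const_max σ').lipschitzOnWith
    exact hC.comp hclip (fun t _ => hclampmem t)
  have hlipmax : ∃ C, LipschitzOnWith C (fun t : ℝ => max (t - σ) 0) (Icc σ' (2*ρ₀)) := by
    refine ⟨1, ?_⟩
    have h1 : LipschitzWith 1 (fun t : ℝ => max (t - σ) 0) := by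
      apply LipschitzWith.of_dist_le_mul
      intro x y
      simp only [Real.dist_eq, NNReal.coe_one, one_mul]
      calc |max (x - σ) 0 - max (y - σ) 0| ≤ max |x - σ - (y - σ)| |0 - 0| :=
            abs_max_sub_max_le_max _ _ _ _
        _ = |x - y| := by rw [sub_sub_sub_cancel_right]; simp
    exact h1.lipschitzOnWith
  have hlipf4 : ∃ C, LipschitzOnWith C f4 (Icc σ' (2*ρ₀)) :=
    exlip_add (f := fun t => A/D * F t) (g := fun t => a/ρ * max (t - σ) 0)
      (exlip_const_mul (A/D) hlipF) (exlip_const_mul (a/ρ) hlipmax)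
  have hlipη : ∃ C, LipschitzOnWith C η (Icc σ' (2*ρ₀)) :=
    exlip_min (f := fun t => min (max (f1 t) A) 1) (g := fun t => min (f3 t) (f4 t))
      (exlip_min (f := fun t => max (f1 t) A) (g := fun _ => (1:ℝ))
        (exlip_max (f := f1) (g := fun _ => A) hlipf1 hlipA) hlip1)
      (exlip_min (f := f3) (g := f4) hlipf3 hlipf4)
  -- endpoint values
  have hηa : η σ' = 0 := by
    have e4 : f4 σ' = 0 := by
      show A/D * F σ' + a/ρ * max (σ' - σ) 0 = 0
      have hF0 : F σ' = 0 := by rw [hFval σ' ⟨le_rfl, hσ'σ.le⟩]; exact hFiσ'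
      rw [hF0, max_eq_right (by linarith : σ' - σ ≤ 0)]; ring
    have hf30 : 0 ≤ f3 σ' := hf3_nonneg σ' (by linarith)
    show min (min (max (f1 σ') A) 1) (min (f3 σ') (f4 σ')) = 0
    rw [e4, min_eq_right hf30]
    apply min_eq_right
    exact le_min (hA0.le.trans (le_max_right _ _)) zero_le_one
  have hηb : η (2*ρ₀) = 0 := by
    have e3 : f3 (2*ρ₀) = 0 := by
      show (2*ρ₀ - 2*ρ₀)/ρ₀ = 0
      simp
    show min (min (max (f1 (2*ρ₀)) A) 1) (min (f3 (2*ρ₀)) (f4 (2*ρ₀))) = 0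
    rw [e3, min_eq_left (hf4_nonneg _)]
    apply min_eq_right
    exact le_min (hA0.le.trans (le_max_right _ _)) zero_le_one
  -- apply stability
  have hst := hstab σ' (2*ρ₀) hσ'0 hσ'ρ₀2 (by linarith : 2*ρ₀ < 1) η hlipη
    (by rw [hηa]; ring) (by rw [hηb]; ring)
  have hN1' : (0:ℝ) ≤ (N:ℝ) - 1 := by nlinarith [ha0.le, ha1]
  -- name the integrand
  set G := fun r : ℝ => r ^ ((N : ℝ) - 1) * (deriv u r) ^ 2 *
      ((deriv η r) ^ 2 - ((N : ℝ) - 1) / r ^ 2 * (η r) ^ 2) with hGdef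
  -- derivative identification on the open pieces
  have he1 : ∀ t ∈ Ioo σ' σ, deriv η t = A/D * (1 / hw N u t) := by
    intro t ht
    have hev : η =ᶠ[nhds t] (fun x => A/D * Fi x) :=
      Filter.eventuallyEq_of_mem (isOpen_Ioo.mem_nhds ht) (fun x hx => by
        rw [hsel1 x ⟨hx.1.le, hx.2.le⟩, hFval x ⟨hx.1.le, hx.2.le⟩])
    rw [hev.deriv_eq]
    exact ((hFi_deriv t ⟨ht.1.le, ht.2.le⟩).const_mul (A/D)).deriv
  have he2 : ∀ t ∈ Ioo σ ρ, deriv η t = a * f1 t / t := by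
    intro t ht
    have ht0 : 0 < t := hσ0.trans ht.1
    have hev : η =ᶠ[nhds t] f1 :=
      Filter.eventuallyEq_of_mem (isOpen_Ioo.mem_nhds ht)
        (fun x hx => hsel2 x ⟨hx.1.le, hx.2.le⟩)
    rw [hev.deriv_eq, (hf1_deriv t ht0).deriv]
    have htρ : (0:ℝ) < t/ρ := by positivity
    have h1 : (t/ρ)^(a-1) = (t/ρ)^a / (t/ρ) := by
      rw [Real.rpow_sub htρ, Real.rpow_one]
    have h2 : f1 t = (t/ρ)^a := rfl
    rw [h1, h2]
    field_simp
  have he3 : ∀ t ∈ Ioo ρ ρ₀, deriv η t = 0 := by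
    intro t ht
    have hev : η =ᶠ[nhds t] (fun _ => (1:ℝ)) :=
      Filter.eventuallyEq_of_mem (isOpen_Ioo.mem_nhds ht)
        (fun x hx => hsel3 x ⟨hx.1.le, hx.2.le⟩)
    rw [hev.deriv_eq]
    exact deriv_const t 1
  have he4 : ∀ t ∈ Ioo ρ₀ (2*ρ₀), deriv η t = -(1/ρ₀) := by
    intro t ht
    have hev : η =ᶠ[nhds t] f3 :=
      Filter.eventuallyEq_of_mem (isOpen_Ioo.mem_nhds ht)
        (fun x hx => hsel4 x ⟨hx.1.le, hx.2.le⟩)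
    rw [hev.deriv_eq]
    exact (hf3_deriv t).deriv
  -- continuity facts
  have hFcont : ContinuousOn F (Icc σ' (2*ρ₀)) := by
    obtain ⟨C, hC⟩ := hlipF
    exact hC.continuousOn
  have hIccsub2 : Icc σ ρ ⊆ Icc σ' (2*ρ₀) := Icc_subset_Icc hσ'σ.le (by linarith)
  have hIccsub3 : Icc ρ ρ₀ ⊆ Icc σ' (2*ρ₀) := Icc_subset_Icc (by linarith) (by linarith)
  have hIccsub4 : Icc ρ₀ (2*ρ₀) ⊆ Icc σ' (2*ρ₀) := Icc_subset_Icc (by linarith) le_rfl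
  have htsq : ContinuousOn (fun t : ℝ => ((N:ℝ)-1)/t^2) (Icc σ' (2*ρ₀)) := by
    apply continuousOn_const.div (continuousOn_id.pow 2)
    intro x hx
    exact pow_ne_zero 2 (hσ'0.trans_le hx.1).ne'
  -- the comparison functions on each piece
  set g1 := fun t : ℝ => hw N u t * ((A/D * (1/hw N u t))^2
      - ((N:ℝ)-1)/t^2 * (A/D * F t)^2) with hg1def
  set g3 := fun t : ℝ => -(((N:ℝ)-1) * (hw N u t / t^2)) with hg3def
  set g4 := fun t : ℝ => hw N u t * ((1/ρ₀)^2 - ((N:ℝ)-1)/t^2 * (f3 t)^2) with hg4def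
  have hGg1 : ∀ t ∈ Ioo σ' σ, G t = g1 t := by
    intro t ht
    simp only [hGdef, hg1def]
    rw [he1 t ht, hsel1 t ⟨ht.1.le, ht.2.le⟩, hw_def]
  have hGg2 : ∀ t ∈ Ioo σ ρ, G t = (fun _ : ℝ => (0:ℝ)) t := by
    intro t ht
    have ht0 : 0 < t := hσ0.trans ht.1
    simp only [hGdef]
    rw [he2 t ht, hsel2 t ⟨ht.1.le, ht.2.le⟩]
    have hz : (a * f1 t/t)^2 - ((N:ℝ)-1)/t^2 * (f1 t)^2 = 0 := by
      rw [← haa]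
      field_simp
      ring
    rw [hz, mul_zero]
  have hGg3 : ∀ t ∈ Ioo ρ ρ₀, G t = g3 t := by
    intro t ht
    simp only [hGdef, hg3def]
    rw [he3 t ht, hsel3 t ⟨ht.1.le, ht.2.le⟩, hw_def]
    ring
  have hGg4 : ∀ t ∈ Ioo ρ₀ (2*ρ₀), G t = g4 t := by
    intro t ht
    simp only [hGdef, hg4def]
    rw [he4 t ht, hsel4 t ⟨ht.1.le, ht.2.le⟩, hw_def]
    ring
  -- continuity of the comparison functions
  have hg1cont : ContinuousOn g1 (Icc σ' σ) := by
    simp only [hg1def]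
    apply ContinuousOn.mul (hwc.mono hIccsub)
    apply ContinuousOn.sub
    · exact (continuousOn_const.mul (hinvc.mono hIccsub)).pow 2
    · exact (htsq.mono hIccsub).mul
        ((continuousOn_const.mul (hFcont.mono hIccsub)).pow 2)
  have hg3cont : ContinuousOn g3 (Icc ρ ρ₀) := by
    simp only [hg3def]
    apply ContinuousOn.neg
    apply continuousOn_const.mul
    apply ContinuousOn.div (hwc.mono hIccsub3) ((continuousOn_id.pow 2).mono (fun x _ => trivial))
    intro x hx
    exact pow_ne_zero 2 (hρ0.trans_le hx.1).ne'
  have hg4cont : ContinuousOn g4 (Icc ρ₀ (2*ρ₀)) := by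
    simp only [hg4def]
    apply ContinuousOn.mul (hwc.mono hIccsub4)
    apply ContinuousOn.sub continuousOn_const
    apply ContinuousOn.mul (htsq.mono hIccsub4)
    apply ContinuousOn.pow
    exact (continuousOn_const.sub continuousOn_id).div_const ρ₀
  -- interval integrability of G on each piece
  have hint1 : IntervalIntegrable G volume σ' σ := by
    rw [intervalIntegrable_iff_integrableOn_Ioo_of_le hσ'σ.le]
    exact ((hg1cont.integrableOn_compact isCompact_Icc).mono_set
      Ioo_subset_Icc_self).congr_fun (fun t ht => (hGg1 t ht).symm) measurableSet_Ioo
  have hint2 : IntervalIntegrable G volume σ ρ := by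
    rw [intervalIntegrable_iff_integrableOn_Ioo_of_le hσρ.le]
    exact (integrableOn_zero (μ := volume)).congr_fun
      (fun t ht => (hGg2 t ht).symm) measurableSet_Ioo
  have hint3 : IntervalIntegrable G volume ρ ρ₀ := by
    rw [intervalIntegrable_iff_integrableOn_Ioo_of_le hρρ₀.le]
    exact ((hg3cont.integrableOn_compact isCompact_Icc).mono_set
      Ioo_subset_Icc_self).congr_fun (fun t ht => (hGg3 t ht).symm) measurableSet_Ioo
  have hint4 : IntervalIntegrable G volume ρ₀ (2*ρ₀) := by
    rw [intervalIntegrable_iff_integrableOn_Ioo_of_le (by linarith)]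
    exact ((hg4cont.integrableOn_compact isCompact_Icc).mono_set
      Ioo_subset_Icc_self).congr_fun (fun t ht => (hGg4 t ht).symm) measurableSet_Ioo
  -- split the stability integral
  have h12 := intervalIntegral.integral_add_adjacent_intervals hint1 hint2
  have h123 := intervalIntegral.integral_add_adjacent_intervals (hint1.trans hint2) hint3
  have h1234 := intervalIntegral.integral_add_adjacent_intervals
    ((hint1.trans hint2).trans hint3) hint4
  -- evaluate/estimate the pieces
  have hP2 : ∫ t in σ..ρ, G t = 0 := by
    rw [integral_congr_Ioo hσρ.le hGg2]
    simp
  have hP3 : ∫ t in ρ..ρ₀, G t = -(((N:ℝ)-1) * ∫ t in ρ..ρ₀, hw N u t / t^2) := by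
    rw [integral_congr_Ioo hρρ₀.le hGg3]
    simp only [hg3def]
    rw [intervalIntegral.integral_neg, intervalIntegral.integral_const_mul]
  have hP1 : ∫ t in σ'..σ, G t ≤ 1 := by
    rw [integral_congr_Ioo hσ'σ.le hGg1]
    have hle : ∫ t in σ'..σ, g1 t ≤ ∫ t in σ'..σ, (A/D)^2 * (1/hw N u t) := by
      apply intervalIntegral.integral_mono_on hσ'σ.le
        (hg1cont.intervalIntegrable_of_Icc hσ'σ.le)
        ((continuousOn_const.mul (hinvc.mono hIccsub)).intervalIntegrable_of_Icc hσ'σ.le)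
      intro x hx
      have hwx := hwp x (hIccsub hx)
      have hx0 : 0 < x := hσ'0.trans_le hx.1
      have heq : g1 x = (A/D)^2 * (1/hw N u x)
          - hw N u x * (((N:ℝ)-1)/x^2 * (A/D * F x)^2) := by
        simp only [hg1def]
        field_simp
      have hY : 0 ≤ hw N u x * (((N:ℝ)-1)/x^2 * (A/D * F x)^2) := by positivity
      show g1 x ≤ (A/D)^2 * (1/hw N u x)
      linarith
    have hval : ∫ t in σ'..σ, (A/D)^2 * (1/hw N u t) = (A/D)^2 * D := by
      rw [intervalIntegral.integral_const_mul, ← hDdef]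
    have hfin2 : (A/D)^2 * D = A^2/D := by field_simp
    have hfin3 : A^2/D ≤ 1 := (div_le_one hD0).mpr hAD.le
    linarith
  have hP4 : ∫ t in ρ₀..(2*ρ₀), G t ≤ (∫ t in ρ₀..(2*ρ₀), hw N u t)/ρ₀^2 := by
    rw [integral_congr_Ioo (by linarith) hGg4]
    have hle : ∫ t in ρ₀..(2*ρ₀), g4 t ≤ ∫ t in ρ₀..(2*ρ₀), hw N u t * (1/ρ₀^2) := by
      apply intervalIntegral.integral_mono_on (by linarith)
        (hg4cont.intervalIntegrable_of_Icc (by linarith))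
        (((hwc.mono hIccsub4).mul continuousOn_const).intervalIntegrable_of_Icc (by linarith))
      intro x hx
      have hwx := hwp x (hIccsub4 hx)
      have hx0 : 0 < x := hρ₀0.trans_le hx.1
      have heq : g4 x = hw N u x * (1/ρ₀^2)
          - hw N u x * (((N:ℝ)-1)/x^2 * (f3 x)^2) := by
        simp only [hg4def]
        ring
      have hY : 0 ≤ hw N u x * (((N:ℝ)-1)/x^2 * (f3 x)^2) := by positivity
      show g4 x ≤ hw N u x * (1/ρ₀^2)
      linarith
    have hval : ∫ t in ρ₀..(2*ρ₀), hw N u t * (1/ρ₀^2)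
        = (∫ t in ρ₀..(2*ρ₀), hw N u t) * (1/ρ₀^2) := intervalIntegral.integral_mul_const _ _
    have hfin2 : (∫ t in ρ₀..(2*ρ₀), hw N u t) * (1/ρ₀^2)
        = (∫ t in ρ₀..(2*ρ₀), hw N u t)/ρ₀^2 := by ring
    linarith
  linarith [hst, hP1, hP2, hP3, hP4, h12, h123, h1234]






set_option maxHeartbeats 1000000 in
lemma part2_false (N : ℕ) (hN : 2 ≤ N) {a β : ℝ}
    (ha1 : 1 ≤ a) (haa : a * a = (N:ℝ) - 1)
    (hβ0 : 0 < β) (hβ1 : β < 1)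
    (hnz : ∀ t ∈ Ioo (0:ℝ) β, deriv u t ≠ 0)
    (hu : ContDiffOn ℝ 2 u (Ioc (0:ℝ) 1))
    (hcd : ContinuousOn (deriv u) (Ioo (0:ℝ) 1))
    (hstab : ∀ r₁ r₂ : ℝ, 0 < r₁ → r₁ < r₂ → r₂ < 1 → ∀ η : ℝ → ℝ,
      (∃ C, LipschitzOnWith C η (Icc r₁ r₂)) →
      η r₁ * deriv u r₁ = 0 → η r₂ * deriv u r₂ = 0 →
      0 ≤ ∫ r in r₁..r₂, r ^ ((N : ℝ) - 1) * (deriv u r) ^ 2 *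
          ((deriv η r) ^ 2 - ((N : ℝ) - 1) / r ^ 2 * (η r) ^ 2))
    (hH1 : ¬ IntegrableOn (fun r : ℝ => r ^ ((N : ℝ) - 1) * (deriv u r) ^ 2)
      (Ioc (0 : ℝ) 1))
    (hnPhi : ∀ M : ℝ, 0 < M → ∀ ρs, ρs ∈ Ioo (0:ℝ) (β/4) →
      ∃ ρ ∈ Ioo (0:ℝ) ρs, ∃ σ' ∈ Ioo (0:ℝ) ρ,
      M * ρ ^ (2*a) < ∫ t in σ'..ρ, 1 / hw N u t) :
    False := by
  have hN1 : (0:ℝ) < (N:ℝ) - 1 := by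
    have h2 : (2:ℝ) ≤ (N:ℝ) := by exact_mod_cast hN
    linarith
  set ρ₀ := β/4 with hρ₀def
  have hρ₀0 : 0 < ρ₀ := by rw [hρ₀def]; positivity
  have h2ρ₀ : 2*ρ₀ < β := by rw [hρ₀def]; linarith
  have hρ₀1 : ρ₀ < 1 := by rw [hρ₀def]; linarith
  set c₀ := (∫ t in ρ₀..(2*ρ₀), hw N u t)/ρ₀^2 with hc₀def
  have hdiamond : ∀ ρ, ρ ∈ Ioo (0:ℝ) ρ₀ →
      ((N:ℝ)-1) * (∫ t in ρ..ρ₀, hw N u t / t^2) ≤ c₀ + 1 := by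
    intro ρ hρ
    have hρpow : 0 < ρ ^ (2*a) := Real.rpow_pos_of_pos hρ.1 (2*a)
    have hM0 : 0 < (ρ ^ (2*a))⁻¹ := by positivity
    obtain ⟨σ, hσ, σ', hσ', hDlt⟩ := hnPhi _ hM0 ρ hρ
    have hDlt' : (σ/ρ) ^ (2*a) < ∫ t in σ'..σ, 1 / hw N u t := by
      have h1 : (σ/ρ) ^ (2*a) = (ρ ^ (2*a))⁻¹ * σ^(2*a) := by
        rw [Real.div_rpow hσ.1.le hρ.1.le, div_eq_mul_inv]
        ring
      rw [h1]
      exact hDlt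
    exact stability_window N hN ha1 haa hβ0 hβ1 hnz hcd hstab
      hσ'.1 hσ'.2 hσ.2 hρ.2 h2ρ₀ hDlt'
  have hsubIoo : Icc (0:ℝ) ρ₀ ∩ Ioi 0 ⊆ Ioo (0:ℝ) 1 := fun x hx =>
    ⟨hx.2, lt_of_le_of_lt hx.1.2 hρ₀1⟩
  have hbnd : ∀ ρ, ρ ∈ Ioo (0:ℝ) ρ₀ →
      (∫ t in Ioc ρ ρ₀, ‖hw N u t‖) ≤ ρ₀^2*(c₀+1)/((N:ℝ)-1) := by
    intro ρ hρ
    have h1 := hdiamond ρ hρ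
    have hsub : Icc ρ ρ₀ ⊆ Ioo (0:ℝ) 1 := fun x hx =>
      ⟨hρ.1.trans_le hx.1, lt_of_le_of_lt hx.2 hρ₀1⟩
    have hcont : ContinuousOn (hw N u) (Icc ρ ρ₀) := (contHw N hcd).mono hsub
    have hcont2 : ContinuousOn (fun t => ρ₀^2 * (hw N u t / t^2)) (Icc ρ ρ₀) := by
      apply continuousOn_const.mul
      apply hcont.div (continuousOn_id.pow 2)
      intro x hx
      exact pow_ne_zero 2 (hρ.1.trans_le hx.1).ne'
    have hmono : ∫ t in ρ..ρ₀, hw N u t ≤ ∫ t in ρ..ρ₀, ρ₀^2 * (hw N u t / t^2) := by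
      apply intervalIntegral.integral_mono_on hρ.2.le
        (hcont.intervalIntegrable_of_Icc hρ.2.le)
        (hcont2.intervalIntegrable_of_Icc hρ.2.le)
      intro x hx
      have hx0 : 0 < x := hρ.1.trans_le hx.1
      have hhx : 0 ≤ hw N u x := hwNonneg N hx0.le
      have hxx : hw N u x / x^2 * x^2 = hw N u x := by
        field_simp
      calc hw N u x = hw N u x / x^2 * x^2 := hxx.symm
        _ ≤ hw N u x / x^2 * ρ₀^2 := by
            apply mul_le_mul_of_nonneg_left _ (by positivity)
            have : x ≤ ρ₀ := hx.2
            nlinarith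
        _ = ρ₀^2 * (hw N u x / x^2) := by ring
    have hval : ∫ t in ρ..ρ₀, ρ₀^2 * (hw N u t / t^2)
        = ρ₀^2 * ∫ t in ρ..ρ₀, hw N u t / t^2 := intervalIntegral.integral_const_mul _ _
    have hnorm : ∫ t in Ioc ρ ρ₀, ‖hw N u t‖ = ∫ t in ρ..ρ₀, hw N u t := by
      rw [intervalIntegral.integral_of_le hρ.2.le]
      apply setIntegral_congr_fun measurableSet_Ioc
      intro x hx
      exact Real.norm_of_nonneg (hwNonneg N (hρ.1.trans hx.1).le)
    rw [hnorm]
    rw [hval] at hmono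
    have hfinal : ρ₀^2 * ∫ t in ρ..ρ₀, hw N u t / t^2 ≤ ρ₀^2*(c₀+1)/((N:ℝ)-1) := by
      rw [div_eq_mul_inv]
      have h2 : ∫ t in ρ..ρ₀, hw N u t / t^2 ≤ (c₀+1)/((N:ℝ)-1) := by
        rw [le_div_iff₀ hN1]
        linarith
      calc ρ₀^2 * ∫ t in ρ..ρ₀, hw N u t / t^2 ≤ ρ₀^2 * ((c₀+1)/((N:ℝ)-1)) := by
            apply mul_le_mul_of_nonneg_left h2 (by positivity)
        _ = ρ₀^2*(c₀+1) * ((N:ℝ)-1)⁻¹ := by rw [div_eq_mul_inv]; ring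
    linarith [hmono, hfinal]
  -- integrability near the origin
  have hIoc : IntegrableOn (hw N u) (Ioc (0:ℝ) ρ₀) := by
    have hseq : ∀ n : ℕ, ρ₀ * (1/2)^(n+1) ∈ Ioo (0:ℝ) ρ₀ := by
      intro n
      constructor
      · positivity
      · have h1 : ((1:ℝ)/2)^(n+1) < 1 := by
          apply pow_lt_one₀ (by norm_num) (by norm_num) (Nat.succ_ne_zero n)
        nlinarith
    apply integrableOn_Ioc_of_intervalIntegral_norm_bounded_left (l := Filter.atTop)
      (a := fun n : ℕ => ρ₀ * (1/2)^(n+1)) (I := ρ₀^2*(c₀+1)/((N:ℝ)-1)) (b := ρ₀)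
    · intro n
      have hsub : Icc (ρ₀ * (1/2)^(n+1)) ρ₀ ⊆ Ioo (0:ℝ) 1 := fun x hx =>
        ⟨(hseq n).1.trans_le hx.1, lt_of_le_of_lt hx.2 hρ₀1⟩
      exact (((contHw N hcd).mono hsub).integrableOn_compact isCompact_Icc).mono_set
        Ioc_subset_Icc_self
    · have h0 : Filter.Tendsto (fun n : ℕ => ((1:ℝ)/2)^(n+1)) Filter.atTop (nhds 0) := by
        have := tendsto_pow_atTop_nhds_zero_of_lt_one
          (by norm_num : (0:ℝ) ≤ 1/2) (by norm_num : (1:ℝ)/2 < 1)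
        exact this.comp (Filter.tendsto_add_atTop_nat 1)
      have := h0.const_mul ρ₀
      simpa using this
    · exact Filter.Eventually.of_forall (fun n => hbnd _ (hseq n))
  apply hH1
  have hun : Ioc (0:ℝ) 1 = Ioc 0 ρ₀ ∪ Ioc ρ₀ 1 :=
    (Ioc_union_Ioc_eq_Ioc hρ₀0.le hρ₀1.le).symm
  rw [hun]
  exact hIoc.union (tailInt N hu hρ₀0)

end Stmt7Aux

set_option maxHeartbeats 1000000 in
theorem stmt_7 (N : ℕ) (hN : 2 ≤ N) (f : ℝ → ℝ) (hf : ContDiff ℝ 1 f)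
    (u : ℝ → ℝ) (hu : ContDiffOn ℝ 2 u (Ioc (0 : ℝ) 1))
    (heq : ∀ r ∈ Ioc (0 : ℝ) 1,
      -(deriv (deriv u) r) - ((N : ℝ) - 1) / r * deriv u r = f (u r))
    (hstab : ∀ r₁ r₂ : ℝ, 0 < r₁ → r₁ < r₂ → r₂ < 1 → ∀ η : ℝ → ℝ,
      (∃ C, LipschitzOnWith C η (Icc r₁ r₂)) →
      η r₁ * deriv u r₁ = 0 → η r₂ * deriv u r₂ = 0 →
      0 ≤ ∫ r in r₁..r₂,
        r ^ ((N : ℝ) - 1) * (deriv u r) ^ 2 *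
          ((deriv η r) ^ 2 - ((N : ℝ) - 1) / r ^ 2 * (η r) ^ 2))
    (hH1 : ¬ IntegrableOn (fun r : ℝ => r ^ ((N : ℝ) - 1) * (deriv u r) ^ 2)
      (Ioc (0 : ℝ) 1)) :
    ∃ K > (0 : ℝ), ∃ r₀ ∈ Ioo (0 : ℝ) 1, ∀ r ∈ Ioo (0 : ℝ) r₀,
      (∫ s in (r / 2)..r, 1 / (deriv u s) ^ 2)
        ≤ K * r ^ ((N : ℝ) + 2 * Real.sqrt ((N : ℝ) - 1) - 1) := by
  classical
  have hcd : ContinuousOn (deriv u) (Ioo (0:ℝ) 1) := Stmt7Aux.contDeriv hu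
  obtain ⟨β, hβ0, hβ1, hnz⟩ := Stmt7Aux.exists_nonvanish N hN hu hcd hstab hH1
  set a := Real.sqrt ((N:ℝ) - 1) with hadef
  have hN2 : (2:ℝ) ≤ (N:ℝ) := by exact_mod_cast hN
  have hN1 : (0:ℝ) ≤ (N:ℝ) - 1 := by linarith
  have haa : a * a = (N:ℝ) - 1 := Real.mul_self_sqrt hN1
  have ha1 : 1 ≤ a := by
    have ha0 : 0 ≤ a := Real.sqrt_nonneg _
    nlinarith [haa]
  by_cases hPhi : ∃ M : ℝ, 0 < M ∧ ∃ ρs, ρs ∈ Ioo (0:ℝ) (β/4) ∧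
      ∀ ρ ∈ Ioo (0:ℝ) ρs, ∀ σ' ∈ Ioo (0:ℝ) ρ,
      (∫ t in σ'..ρ, 1 / Stmt7Aux.hw N u t) ≤ M * ρ ^ (2*a)
  · obtain ⟨M, hM0, ρs, hρs, hbound⟩ := hPhi
    refine ⟨M, hM0, ρs, ⟨hρs.1, hρs.2.trans (by linarith)⟩, ?_⟩
    intro r hr
    have hr0 : 0 < r := hr.1
    have hrρs : r < ρs := hr.2
    have hrβ : r < β := by
      have := hρs.2
      linarith
    have hwin : Icc (r/2) r ⊆ Ioo (0:ℝ) β := fun x hx =>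
      ⟨lt_of_lt_of_le (half_pos hr0) hx.1, lt_of_le_of_lt hx.2 hrβ⟩
    have hwin1 : Icc (r/2) r ⊆ Ioo (0:ℝ) 1 := fun x hx =>
      ⟨(hwin hx).1, (hwin hx).2.trans hβ1⟩
    have hcont1 : ContinuousOn (fun s_ : ℝ => 1/(deriv u s_)^2) (Icc (r/2) r) := by
      apply continuousOn_const.div ((hcd.mono hwin1).pow 2)
      intro x hx
      exact pow_ne_zero 2 (hnz x (hwin hx))
    have hcont2 : ContinuousOn (fun s_ : ℝ => r ^ ((N:ℝ)-1) * (1 / Stmt7Aux.hw N u s_))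
        (Icc (r/2) r) := by
      apply continuousOn_const.mul
      apply continuousOn_const.div ((Stmt7Aux.contHw N hcd).mono hwin1)
      intro x hx
      exact (Stmt7Aux.hwPos N (hwin hx).1 (hnz x (hwin hx))).ne'
    have hptw : ∀ x ∈ Icc (r/2) r,
        1/(deriv u x)^2 ≤ r ^ ((N:ℝ)-1) * (1 / Stmt7Aux.hw N u x) := by
      intro x hx
      have hx0 : 0 < x := (hwin hx).1
      have hd := hnz x (hwin hx)
      have hhw : 0 < Stmt7Aux.hw N u x := Stmt7Aux.hwPos N hx0 hd
      have hxp : (0:ℝ) < x ^ ((N:ℝ)-1) := Real.rpow_pos_of_pos hx0 _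
      have e1 : 1/(deriv u x)^2 = x ^ ((N:ℝ)-1) * (1 / Stmt7Aux.hw N u x) := by
        rw [Stmt7Aux.hw_def]
        field_simp
      rw [e1]
      apply mul_le_mul_of_nonneg_right (Real.rpow_le_rpow hx0.le hx.2 hN1) (by positivity)
    have hint : (∫ s_ in (r/2)..r, 1/(deriv u s_)^2)
        ≤ ∫ s_ in (r/2)..r, r ^ ((N:ℝ)-1) * (1/Stmt7Aux.hw N u s_) :=
      intervalIntegral.integral_mono_on (by linarith)
        (hcont1.intervalIntegrable_of_Icc (by linarith))
        (hcont2.intervalIntegrable_of_Icc (by linarith)) hptw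
    have hval : (∫ s_ in (r/2)..r, r ^ ((N:ℝ)-1) * (1/Stmt7Aux.hw N u s_))
        = r ^ ((N:ℝ)-1) * ∫ s_ in (r/2)..r, 1/Stmt7Aux.hw N u s_ :=
      intervalIntegral.integral_const_mul _ _
    have hΦr : (∫ t in (r/2)..r, 1 / Stmt7Aux.hw N u t) ≤ M * r ^ (2*a) :=
      hbound r ⟨hr0, hrρs⟩ (r/2) ⟨half_pos hr0, half_lt_self hr0⟩
    have hcomb : r ^ ((N:ℝ)-1) * (∫ t in (r/2)..r, 1/Stmt7Aux.hw N u t)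
        ≤ r ^ ((N:ℝ)-1) * (M * r ^ (2*a)) :=
      mul_le_mul_of_nonneg_left hΦr (Real.rpow_nonneg hr0.le _)
    have hexp : r ^ ((N:ℝ)-1) * (M * r ^ (2*a)) = M * r ^ ((N:ℝ) + 2*a - 1) := by
      rw [show (N:ℝ) + 2*a - 1 = ((N:ℝ)-1) + 2*a by ring, Real.rpow_add hr0]
      ring
    calc (∫ s_ in (r/2)..r, 1/(deriv u s_)^2)
        ≤ r ^ ((N:ℝ)-1) * ∫ s_ in (r/2)..r, 1/Stmt7Aux.hw N u s_ := by rw [← hval]; exact hint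
      _ ≤ r ^ ((N:ℝ)-1) * (M * r ^ (2*a)) := hcomb
      _ = M * r ^ ((N:ℝ) + 2*a - 1) := hexp
  · exfalso
    push_neg at hPhi
    exact Stmt7Aux.part2_false N hN ha1 haa hβ0 hβ1 hnz hu hcd hstab hH1 hPhi
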